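/- Let Ω = [ā,b̄] with integers 1 ≤ a < b be a metallic-colored ratio, with T = [[ab+1,a],[b,1]], λ = ab+1+aΩ, and U = (T⁻¹)ᵀ. Then the sequences of primary resonances and of main secondary resonances (the two resonant sequences formed by the resonant convergents) are generated respectively by the primitive integers q̂ = 1 and q̄ = b+1 if a = 1, and by q̂ = a and q̄ = 1 if a ≥ 2; and in both cases the separation satisfies 1 < B₀ ≤ γ̃*_{q̄} = b/a. -/

import Mathlib

set_option maxHeartbeats 1000000


open Real Filter Matrix

noncomputable section

/-- Orbit of the Gauss map `g(x) = {1/x}` starting at `Ω`: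
`x₀ = Ω`, `x_{j+1} = g(x_j)`. -/
def gaussOrbit (Ω : ℝ) : ℕ → ℝ
  | 0 => Ω
  | j + 1 => Int.fract (1 / gaussOrbit Ω j)

/-- `cfA Ω j` is the partial quotient `a_{j+1}` of the continued fraction of `Ω`. -/
def cfA (Ω : ℝ) (j : ℕ) : ℤ := ⌊1 / gaussOrbit Ω j⌋

/-- The matrix `[[a, 1], [1, 0]]`. -/
def Acf (a : ℤ) : Matrix (Fin 2) (Fin 2) ℤ := !![a, 1; 1, 0]

/-- The product `A₁ ⋯ A_m` with `A_i = [[a_i, 1], [1, 0]]`. -/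
def cfMatProd (Ω : ℝ) (m : ℕ) : Matrix (Fin 2) (Fin 2) ℤ :=
  ((List.range m).map fun i => Acf (cfA Ω i)).prod

/-- `cfQ Ω (j+1) = q_j`:  `q₋₁ = 0`, `q₀ = 1`, `q_j = a_j q_{j-1} + q_{j-2}`. -/
def cfQ (Ω : ℝ) : ℕ → ℤ
  | 0 => 0
  | 1 => 1
  | j + 2 => cfA Ω j * cfQ Ω (j + 1) + cfQ Ω j

/-- `cfP Ω (j+1) = p_j`:  `p₋₁ = 1`, `p₀ = 0`, `p_j = a_j p_{j-1} + p_{j-2}`. -/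
def cfP (Ω : ℝ) : ℕ → ℤ
  | 0 => 1
  | 1 => 0
  | j + 2 => cfA Ω j * cfP Ω (j + 1) + cfP Ω j

/-- The vector convergent `w(j) = (q_j, p_j)`. -/
def wconv (Ω : ℝ) (j : ℕ) : Fin 2 → ℤ := ![cfQ Ω (j + 1), cfP Ω (j + 1)]

/-- The resonant convergent `v(j) = (−p_j, q_j)`. -/
def vconv (Ω : ℝ) (j : ℕ) : Fin 2 → ℤ := ![-cfP Ω (j + 1), cfQ Ω (j + 1)]

/-- A quadratic irrational number. -/
def IsQuadraticIrrational (Ω : ℝ) : Prop :=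
  Irrational Ω ∧ ∃ A B C : ℤ, A ≠ 0 ∧ (A : ℝ) * Ω ^ 2 + (B : ℝ) * Ω + (C : ℝ) = 0

end
noncomputable section

/-- `⟨k, ω⟩ = k₁ + k₂ Ω` for `ω = (1, Ω)`. -/
def pairω (Ω : ℝ) (k : Fin 2 → ℤ) : ℝ := (k 0 : ℝ) + (k 1 : ℝ) * Ω

/-- `|k|₁ = |k₁| + |k₂|`. -/
def norm1 (k : Fin 2 → ℤ) : ℤ := |k 0| + |k 1|

/-- `p⁰(q)`: the integer nearest to `qΩ`. -/
def p0 (Ω : ℝ) (q : ℤ) : ℤ := round ((q : ℝ) * Ω)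

/-- `k⁰(q) = (−p⁰(q), q)`. -/
def kzero (Ω : ℝ) (q : ℤ) : Fin 2 → ℤ := ![-p0 Ω q, q]

/-- The set `A` of quasi-resonances: vectors `k⁰(q)`, `q ≥ 1`, with `|⟨k,ω⟩| < 1/2`. -/
def inA (Ω : ℝ) (k : Fin 2 → ℤ) : Prop :=
  ∃ q : ℤ, 1 ≤ q ∧ k = kzero Ω q ∧ |pairω Ω k| < 1 / 2

/-- A quasi-resonance `k` is primitive if `U⁻¹k` is not a quasi-resonance. -/
def PrimitiveVec (Ω : ℝ) (U : Matrix (Fin 2) (Fin 2) ℤ) (k : Fin 2 → ℤ) : Prop :=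
  inA Ω k ∧ ¬inA Ω (U⁻¹.mulVec k)

/-- A primitive integer `q ≥ 1`. -/
def PrimitiveInt (Ω : ℝ) (U : Matrix (Fin 2) (Fin 2) ℤ) (q : ℤ) : Prop :=
  1 ≤ q ∧ PrimitiveVec Ω U (kzero Ω q)

/-- The resonant sequence `s(q, n) = Uⁿ k⁰(q)`. -/
def sres (Ω : ℝ) (U : Matrix (Fin 2) (Fin 2) ℤ) (q : ℤ) (n : ℕ) : Fin 2 → ℤ :=
  (U ^ n).mulVec (kzero Ω q)

/-- `U = σ (T⁻¹)ᵀ` with `σ = det T = (−1)^m` and `T = A₁⋯A_m`. -/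
def Umat (Ω : ℝ) (m : ℕ) : Matrix (Fin 2) (Fin 2) ℤ :=
  ((-1 : ℤ) ^ m) • ((cfMatProd Ω m)⁻¹)ᵀ

/-- The numerator `γ_k = |⟨k,ω⟩| · |k|₁`. -/
def gammaK (Ω : ℝ) (k : Fin 2 → ℤ) : ℝ := |pairω Ω k| * (norm1 k : ℝ)

/-- `K_q = |z_q|(1+Ω)/|c+bΩ²|`, where `z_q = cq + bpΩ`, `p = p⁰(q)`,
and `b, c` are the off-diagonal entries of `T = A₁⋯A_m = [[a,b],[c,d]]`. -/
def KqD (Ω : ℝ) (m : ℕ) (q : ℤ) : ℝ :=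
  |(cfMatProd Ω m 1 0 : ℝ) * (q : ℝ) + (cfMatProd Ω m 0 1 : ℝ) * (p0 Ω q : ℝ) * Ω| * (1 + Ω) /
    |(cfMatProd Ω m 1 0 : ℝ) + (cfMatProd Ω m 0 1 : ℝ) * Ω ^ 2|

/-- The limit numerator `γ*_q = |r_q| K_q` with `r_q = qΩ − p⁰(q)`. -/
def gammaStarQ (Ω : ℝ) (m : ℕ) (q : ℤ) : ℝ :=
  |(q : ℝ) * Ω - (p0 Ω q : ℝ)| * KqD Ω m q

end

noncomputable section

/-- The metallic-colored ratio `Ω = [ā,b̄] = (√(a²b²+4ab) − ab)/(2a)`. -/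
def mcΩ (a b : ℤ) : ℝ :=
  (Real.sqrt ((a : ℝ) ^ 2 * (b : ℝ) ^ 2 + 4 * (a : ℝ) * (b : ℝ)) - (a : ℝ) * (b : ℝ)) /
    (2 * (a : ℝ))

/-- `T = [[ab+1, a],[b, 1]]` for a metallic-colored ratio. -/
def mcT (a b : ℤ) : Matrix (Fin 2) (Fin 2) ℤ := !![a * b + 1, a; b, 1]

/-- `U = (T⁻¹)ᵀ` for a metallic-colored ratio (here `det T = 1`). -/
def mcU (a b : ℤ) : Matrix (Fin 2) (Fin 2) ℤ := ((mcT a b)⁻¹)ᵀ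

/-- `δ_q = cq² − (a−d)qp − bp² = bq² − ab·qp − ap²` for `T = [[ab+1,a],[b,1]]`. -/
def mcδ (a b q : ℤ) : ℤ :=
  b * q ^ 2 - a * b * q * p0 (mcΩ a b) q - a * (p0 (mcΩ a b) q) ^ 2

/-- `γ*_q = Ω(1+Ω)|δ_q|/|c+bΩ²|` for a metallic-colored ratio. -/
def mcγ (a b q : ℤ) : ℝ :=
  mcΩ a b * (1 + mcΩ a b) * |(mcδ a b q : ℝ)| / |(b : ℝ) + (a : ℝ) * mcΩ a b ^ 2|

/-- Normalized limit numerator `γ̃*_q = γ*_q/γ*_{q̂}`. -/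
def mcγt (a b qh q : ℤ) : ℝ := mcγ a b q / mcγ a b qh

/-- Primitive integer for a metallic-colored ratio. -/
def mcPrim (a b q : ℤ) : Prop := PrimitiveInt (mcΩ a b) (mcU a b) q

/-- Essential primitive integer for a metallic-colored ratio. -/
def mcEssPrim (a b q : ℤ) : Prop :=
  mcPrim a b q ∧ Int.gcd (kzero (mcΩ a b) q 0) (kzero (mcΩ a b) q 1) = 1

/-- The separation `B₀`: the minimal `γ̃*_q` over essential primitive `q ≠ q̂`. -/
def mcB0 (a b qh : ℤ) : ℝ :=
  sInf {y : ℝ | ∃ q : ℤ, mcEssPrim a b q ∧ q ≠ qh ∧ y = mcγt a b qh q}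

end


lemma mc_key (a b : ℤ) (ha : 1 ≤ a) (hab : a < b) :
    (a:ℝ) * mcΩ a b ^ 2 + (a:ℝ) * (b:ℝ) * mcΩ a b - (b:ℝ) = 0 := by
  have ha' : (1:ℝ) ≤ (a:ℝ) := by exact_mod_cast ha
  have hb' : (a:ℝ) < (b:ℝ) := by exact_mod_cast hab
  have hD : (0:ℝ) ≤ (a:ℝ)^2*(b:ℝ)^2 + 4*(a:ℝ)*(b:ℝ) := by nlinarith
  have hs := Real.sq_sqrt hD
  have hA : (2*(a:ℝ)) ≠ 0 := by linarith
  have e : (2*(a:ℝ)) * mcΩ a b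
      = Real.sqrt ((a:ℝ)^2*(b:ℝ)^2 + 4*(a:ℝ)*(b:ℝ)) - (a:ℝ)*(b:ℝ) := by
    rw [mcΩ, mul_div_cancel₀ _ hA]
  have h4 : (4*(a:ℝ)) * ((a:ℝ) * mcΩ a b ^ 2 + (a:ℝ) * (b:ℝ) * mcΩ a b - (b:ℝ)) = 0 := by
    linear_combination (2*(a:ℝ)*mcΩ a b + Real.sqrt ((a:ℝ)^2*(b:ℝ)^2 + 4*(a:ℝ)*(b:ℝ))
      + (a:ℝ)*(b:ℝ)) * e + hs
  have h4a : (4*(a:ℝ)) ≠ 0 := by linarith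
  exact (mul_eq_zero.mp h4).resolve_left h4a

lemma mcΩ_pos (a b : ℤ) (ha : 1 ≤ a) (hab : a < b) : 0 < mcΩ a b := by
  have ha' : (1:ℝ) ≤ (a:ℝ) := by exact_mod_cast ha
  have hb' : (a:ℝ) < (b:ℝ) := by exact_mod_cast hab
  have hD : (0:ℝ) ≤ (a:ℝ)^2*(b:ℝ)^2 + 4*(a:ℝ)*(b:ℝ) := by nlinarith
  have h : (a:ℝ)*(b:ℝ) < Real.sqrt ((a:ℝ)^2*(b:ℝ)^2 + 4*(a:ℝ)*(b:ℝ)) := by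
    nlinarith [Real.sq_sqrt hD, Real.sqrt_nonneg ((a:ℝ)^2*(b:ℝ)^2 + 4*(a:ℝ)*(b:ℝ))]
  rw [mcΩ]
  apply div_pos (by linarith) (by linarith)

lemma mcΩ_lt_one (a b : ℤ) (ha : 1 ≤ a) (hab : a < b) : mcΩ a b < 1 := by
  have ha' : (1:ℝ) ≤ (a:ℝ) := by exact_mod_cast ha
  have hb' : (a:ℝ) < (b:ℝ) := by exact_mod_cast hab
  by_contra h
  push_neg at h
  have k := mc_key a b ha hab
  nlinarith [mul_nonneg (by linarith : (0:ℝ) ≤ (a:ℝ)-1) (by linarith : (0:ℝ) ≤ (b:ℝ)),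
    mul_nonneg (by linarith : (0:ℝ) ≤ (a:ℝ)) (by linarith : (0:ℝ) ≤ mcΩ a b - 1),
    mul_nonneg (mul_nonneg (by linarith : (0:ℝ) ≤ (a:ℝ)) (by linarith : (0:ℝ) ≤ mcΩ a b - 1))
      (by linarith [mcΩ_pos a b ha hab] : (0:ℝ) ≤ mcΩ a b),
    mul_nonneg (mul_nonneg (by linarith : (0:ℝ) ≤ (a:ℝ)) (by linarith : (0:ℝ) ≤ (b:ℝ)))
      (by linarith : (0:ℝ) ≤ mcΩ a b - 1)]

lemma mc_aΩ_lt_one (a b : ℤ) (ha : 1 ≤ a) (hab : a < b) : (a:ℝ) * mcΩ a b < 1 := by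
  have ha' : (1:ℝ) ≤ (a:ℝ) := by exact_mod_cast ha
  have hb' : (a:ℝ) < (b:ℝ) := by exact_mod_cast hab
  have hΩ := mcΩ_pos a b ha hab
  by_contra h
  push_neg at h
  have k := mc_key a b ha hab
  nlinarith [mul_nonneg (by linarith : (0:ℝ) ≤ (a:ℝ)*mcΩ a b - 1) (by linarith : (0:ℝ) ≤ mcΩ a b),
    mul_nonneg (by linarith : (0:ℝ) ≤ (a:ℝ)*mcΩ a b - 1) (by linarith : (0:ℝ) ≤ (b:ℝ))]

lemma mc_aΩ_gt (a b : ℤ) (ha : 1 ≤ a) (hab : a < b) : 2/3 < (a:ℝ) * mcΩ a b := by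
  have ha' : (1:ℝ) ≤ (a:ℝ) := by exact_mod_cast ha
  have hb' : (2:ℝ) ≤ (b:ℝ) := by exact_mod_cast (by omega : (2:ℤ) ≤ b)
  have hΩ := mcΩ_pos a b ha hab
  have hΩ1 := mcΩ_lt_one a b ha hab
  by_contra h
  push_neg at h
  have k := mc_key a b ha hab
  nlinarith [mul_nonneg (by linarith : (0:ℝ) ≤ 2/3 - (a:ℝ)*mcΩ a b)
    (by linarith : (0:ℝ) ≤ mcΩ a b + (b:ℝ))]

lemma round_eq_of' {x : ℝ} {n : ℤ} (h1 : (n:ℝ) - 1/2 ≤ x) (h2 : x < (n:ℝ) + 1/2) :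
    round x = n := by
  rw [round_eq, Int.floor_eq_iff]
  constructor
  · linarith
  · push_cast; linarith

section
variable (a b : ℤ) (ha : 1 ≤ a) (hab : a < b)
include ha hab

lemma mc_p0_a : p0 (mcΩ a b) a = 1 := by
  have h1 := mc_aΩ_gt a b ha hab
  have h2 := mc_aΩ_lt_one a b ha hab
  apply round_eq_of' <;> push_cast <;> [linarith; linarith]

lemma mc_p0_one' (ha2 : 2 ≤ a) : p0 (mcΩ a b) 1 = 0 := by
  have h2 := mc_aΩ_lt_one a b ha hab
  have h0 := mcΩ_pos a b ha hab
  have ha' : (2:ℝ) ≤ (a:ℝ) := by exact_mod_cast ha2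
  have : mcΩ a b < 1/2 := by nlinarith
  apply round_eq_of' <;> push_cast <;> [linarith; linarith]

lemma mc_p0_one1 (ha1 : a = 1) : p0 (mcΩ a b) 1 = 1 := by
  subst ha1
  have h1 := mc_aΩ_gt 1 b ha hab
  have h2 := mc_aΩ_lt_one 1 b ha hab
  push_cast at h1 h2
  apply round_eq_of' <;> push_cast <;> [linarith; linarith]

lemma mc_p0_bp1 (ha1 : a = 1) : p0 (mcΩ a b) (b+1) = b := by
  subst ha1
  have h0 := mcΩ_pos 1 b ha hab
  have h1 := mcΩ_lt_one 1 b ha hab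
  have k := mc_key 1 b ha hab
  push_cast at k
  have hr : ((b:ℝ)+1) * mcΩ 1 b - (b:ℝ) = mcΩ 1 b - mcΩ 1 b^2 := by linarith
  apply round_eq_of' <;> push_cast <;> push_cast at hr <;> nlinarith

lemma mc_cfA0 : cfA (mcΩ a b) 0 = a := by
  have h0 := mcΩ_pos a b ha hab
  have h2 := mc_aΩ_lt_one a b ha hab
  have k := mc_key a b ha hab
  have hb' : (1:ℝ) < (b:ℝ) := by exact_mod_cast lt_of_le_of_lt ha hab
  rw [cfA, show gaussOrbit (mcΩ a b) 0 = mcΩ a b from rfl, Int.floor_eq_iff]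
  constructor
  · rw [le_div_iff₀ h0]; linarith
  · rw [div_lt_iff₀ h0]
    -- 1 < (a+1)Ω :  1 - aΩ = Ω/(b+Ω) < Ω
    push_cast
    nlinarith
end
section
variable (a b : ℤ) (ha : 1 ≤ a) (hab : a < b)
include ha hab

lemma mc_cfA1 : cfA (mcΩ a b) 1 = b := by
  have h0 := mcΩ_pos a b ha hab
  have h1 := mcΩ_lt_one a b ha hab
  have k := mc_key a b ha hab
  have haΩ := mc_aΩ_lt_one a b ha hab
  have hbΩ : (0:ℝ) < (b:ℝ) + mcΩ a b := by
    have : (1:ℝ) < (b:ℝ) := by exact_mod_cast lt_of_le_of_lt ha hab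
    linarith
  have hfr : gaussOrbit (mcΩ a b) 1 = 1/mcΩ a b - (a:ℝ) := by
    show Int.fract (1 / gaussOrbit (mcΩ a b) 0) = _
    rw [Int.fract, show gaussOrbit (mcΩ a b) 0 = mcΩ a b from rfl,
      show ⌊1/mcΩ a b⌋ = a from mc_cfA0 a b ha hab]
  have h3 : 1/mcΩ a b - (a:ℝ) = 1/((b:ℝ)+mcΩ a b) := by
    have h0' : mcΩ a b ≠ 0 := ne_of_gt h0
    have hbΩ' : (b:ℝ) + mcΩ a b ≠ 0 := ne_of_gt hbΩ
    field_simp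
    linear_combination -k
  rw [cfA, hfr, h3, one_div_one_div, Int.floor_eq_iff]
  constructor
  · linarith
  · push_cast; linarith

lemma mc_vconv0 : vconv (mcΩ a b) 0 = ![0, 1] := by
  funext i; fin_cases i <;> simp [vconv, cfP, cfQ]

lemma mc_vconv1 : vconv (mcΩ a b) 1 = ![-1, a] := by
  funext i; fin_cases i <;> simp [vconv, cfP, cfQ, mc_cfA0 a b ha hab]

lemma mc_vconv2 : vconv (mcΩ a b) 2 = ![-b, b*a+1] := by
  funext i; fin_cases i <;>
    simp [vconv, cfP, cfQ, mc_cfA0 a b ha hab, mc_cfA1 a b ha hab]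
end

lemma mcT_inv (a b : ℤ) : (mcT a b)⁻¹ = !![1, -a; -b, a*b+1] := by
  apply Matrix.inv_eq_right_inv
  ext i j
  fin_cases i <;> fin_cases j <;>
    simp [mcT, Matrix.mul_apply, Fin.sum_univ_two] <;> ring

lemma mcU_eq (a b : ℤ) : mcU a b = !![1, -b; -a, a*b+1] := by
  rw [mcU, mcT_inv]
  ext i j; fin_cases i <;> fin_cases j <;> simp [Matrix.transpose_apply]

lemma mcU_inv (a b : ℤ) : (mcU a b)⁻¹ = !![a*b+1, b; a, 1] := by
  rw [mcU_eq]
  apply Matrix.inv_eq_right_inv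
  ext i j
  fin_cases i <;> fin_cases j <;>
    simp [Matrix.mul_apply, Fin.sum_univ_two] <;> ring

lemma mcU_inv_mulVec (a b q : ℤ) :
    (mcU a b)⁻¹.mulVec (kzero (mcΩ a b) q)
      = ![b*q - (a*b+1) * p0 (mcΩ a b) q, q - a * p0 (mcΩ a b) q] := by
  rw [mcU_inv]
  funext i
  fin_cases i <;>
    simp [Matrix.mulVec, dotProduct, Fin.sum_univ_two, kzero] <;> ring

lemma mc_lam_id (a b : ℤ) (ha : 1 ≤ a) (hab : a < b) (q : ℤ) :
    ((b:ℝ)*q - ((a:ℝ)*b+1) * (p0 (mcΩ a b) q : ℝ))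
      + ((q:ℝ) - (a:ℝ) * (p0 (mcΩ a b) q : ℝ)) * mcΩ a b
      = ((a:ℝ)*b + 1 + (a:ℝ) * mcΩ a b) * ((q:ℝ)*mcΩ a b - (p0 (mcΩ a b) q : ℝ)) := by
  linear_combination (-(q:ℝ)) * mc_key a b ha hab

lemma mc_delta_id (a b : ℤ) (ha : 1 ≤ a) (hab : a < b) (q : ℤ) :
    ((mcδ a b q : ℤ) : ℝ) = (a:ℝ) * ((q:ℝ)*mcΩ a b - (p0 (mcΩ a b) q : ℝ))
      * ((b:ℝ)*(q:ℝ) + 2*(q:ℝ)*mcΩ a b - ((q:ℝ)*mcΩ a b - (p0 (mcΩ a b) q : ℝ))) := by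
  rw [mcδ]; push_cast
  linear_combination (-(q:ℝ)^2) * mc_key a b ha hab

lemma mc_prim_cases (a b : ℤ) (ha : 1 ≤ a) (hab : a < b) {q : ℤ} (hprim : mcPrim a b q) :
    q ≤ a * p0 (mcΩ a b) q ∨
    1/2 ≤ ((a:ℝ)*b + 1 + (a:ℝ) * mcΩ a b) * |(q:ℝ)*mcΩ a b - (p0 (mcΩ a b) q : ℝ)| := by
  obtain ⟨hq1, hA, hnA⟩ := hprim
  by_contra hcon
  push_neg at hcon
  obtain ⟨h1, h2⟩ := hcon
  have hΩ := mcΩ_pos a b ha hab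
  have ha' : (1:ℝ) ≤ (a:ℝ) := by exact_mod_cast ha
  have hb' : (a:ℝ) < (b:ℝ) := by exact_mod_cast hab
  have hlam : (0:ℝ) < (a:ℝ)*b + 1 + (a:ℝ)*mcΩ a b := by nlinarith
  have habs : |((q:ℝ)*mcΩ a b - (p0 (mcΩ a b) q : ℝ))
      * ((a:ℝ)*b + 1 + (a:ℝ) * mcΩ a b)| < 1/2 := by
    rw [abs_mul, abs_of_pos hlam]
    calc |(q:ℝ)*mcΩ a b - (p0 (mcΩ a b) q : ℝ)| * ((a:ℝ)*b + 1 + (a:ℝ)*mcΩ a b)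
        = ((a:ℝ)*b + 1 + (a:ℝ)*mcΩ a b) * |(q:ℝ)*mcΩ a b - (p0 (mcΩ a b) q : ℝ)| := by ring
      _ < 1/2 := h2
  have habs' := abs_lt.mp habs
  apply hnA
  have hround : p0 (mcΩ a b) (q - a * p0 (mcΩ a b) q)
      = (a*b+1) * p0 (mcΩ a b) q - b*q := by
    rw [p0]; apply round_eq_of'
    · push_cast
      have := mc_lam_id a b ha hab q
      nlinarith [habs'.1, habs'.2]
    · push_cast
      have := mc_lam_id a b ha hab q
      nlinarith [habs'.1, habs'.2]
  refine ⟨q - a * p0 (mcΩ a b) q, by omega, ?_, ?_⟩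
  · rw [mcU_inv_mulVec]
    funext i; fin_cases i
    · show b*q - (a*b+1) * p0 (mcΩ a b) q = kzero (mcΩ a b) (q - a * p0 (mcΩ a b) q) 0
      simp only [kzero, hround, Matrix.cons_val_zero]
      ring
    · show q - a * p0 (mcΩ a b) q = kzero (mcΩ a b) (q - a * p0 (mcΩ a b) q) 1
      simp [kzero]
  · rw [mcU_inv_mulVec]
    show |pairω (mcΩ a b) ![b*q - (a*b+1) * p0 (mcΩ a b) q, q - a * p0 (mcΩ a b) q]| < 1/2
    have hpe : pairω (mcΩ a b) ![b*q - (a*b+1) * p0 (mcΩ a b) q, q - a * p0 (mcΩ a b) q]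
        = ((q:ℝ)*mcΩ a b - (p0 (mcΩ a b) q : ℝ)) * ((a:ℝ)*b + 1 + (a:ℝ) * mcΩ a b) := by
      simp only [pairω, Matrix.cons_val_zero, Matrix.cons_val_one, Matrix.head_cons]
      push_cast
      have := mc_lam_id a b ha hab q
      linarith [this]
    rw [hpe]
    exact habs
lemma mc_delta_min (a b : ℤ) (ha : 1 ≤ a) (hab : a < b) {q : ℤ}
    (hprim : mcPrim a b q) (hne : q ≠ a) : a < |mcδ a b q| := by
  have hq1 : 1 ≤ q := hprim.1
  by_contra hle
  push_neg at hle
  obtain ⟨p, hpdef⟩ : ∃ p, p0 (mcΩ a b) q = p := ⟨_, rfl⟩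
  have hδeq : mcδ a b q = b*q^2 - a*b*q*p - a*p^2 := by rw [← hpdef]; rfl
  have hΩ : 0 < mcΩ a b := mcΩ_pos a b ha hab
  have hΩ1 : mcΩ a b < 1 := mcΩ_lt_one a b ha hab
  have haΩ : (a:ℝ) * mcΩ a b < 1 := mc_aΩ_lt_one a b ha hab
  have haΩ2 : 2/3 < (a:ℝ) * mcΩ a b := mc_aΩ_gt a b ha hab
  have k := mc_key a b ha hab
  have ha' : (1:ℝ) ≤ (a:ℝ) := by exact_mod_cast ha
  have hb' : (a:ℝ) < (b:ℝ) := by exact_mod_cast hab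
  have hb2 : (2:ℝ) ≤ (b:ℝ) := by exact_mod_cast (by omega : (2:ℤ) ≤ b)
  have hq' : (1:ℝ) ≤ (q:ℝ) := by exact_mod_cast hq1
  have hqΩ : 0 < (q:ℝ) * mcΩ a b := by nlinarith
  have hr : |(q:ℝ) * mcΩ a b - (p:ℝ)| ≤ 1/2 := by
    rw [← hpdef, p0]; exact abs_sub_round _
  have hr1 := (abs_le.mp hr).1
  have hr2 := (abs_le.mp hr).2
  have hp0 : 0 ≤ p := by
    have h2 : (-1:ℝ) < (p:ℝ) := by linarith
    have : (-1:ℤ) < p := by exact_mod_cast h2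
    omega
  have hδR : |((mcδ a b q : ℤ):ℝ)| ≤ (a:ℝ) := by
    have h : ((|mcδ a b q| : ℤ):ℝ) ≤ ((a:ℤ):ℝ) := by exact_mod_cast hle
    rwa [Int.cast_abs] at h
  have hid := mc_delta_id a b ha hab q
  rw [hpdef] at hid
  rcases mc_prim_cases a b ha hab hprim with hcase | hcase
  · -- q ≤ a * p
    rw [hpdef] at hcase
    have hqap : (q:ℝ) ≤ (a:ℝ)*(p:ℝ) := by exact_mod_cast hcase
    have hrneg : (q:ℝ) * mcΩ a b - (p:ℝ) < 0 := by nlinarith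
    have h5 : -(a:ℝ) ≤ ((mcδ a b q : ℤ):ℝ) := by
      have := neg_abs_le (((mcδ a b q : ℤ)):ℝ); linarith
    have h6 : (a:ℝ) * ((p:ℝ) - (q:ℝ)*mcΩ a b)
        * ((b:ℝ)*(q:ℝ) + 2*(q:ℝ)*mcΩ a b + ((p:ℝ) - (q:ℝ)*mcΩ a b)) ≤ (a:ℝ) := by
      have hX : (a:ℝ) * ((p:ℝ) - (q:ℝ)*mcΩ a b)
          * ((b:ℝ)*(q:ℝ) + 2*(q:ℝ)*mcΩ a b + ((p:ℝ) - (q:ℝ)*mcΩ a b))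
          = -((mcδ a b q : ℤ):ℝ) := by rw [hid]; ring
      linarith [hX.le, hX.ge]
    have hs' : (q:ℝ) - (a:ℝ)*(q:ℝ)*mcΩ a b ≤ (a:ℝ)*((p:ℝ) - (q:ℝ)*mcΩ a b) := by nlinarith
    have hbq : (0:ℝ) ≤ (b:ℝ)*(q:ℝ) := by nlinarith
    have hspos : 0 < (p:ℝ) - (q:ℝ)*mcΩ a b := by linarith
    have t1 := mul_le_mul_of_nonneg_right hs' hbq
    have t2 : (a:ℝ)*((p:ℝ) - (q:ℝ)*mcΩ a b) * ((b:ℝ)*(q:ℝ))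
        ≤ (a:ℝ) * ((p:ℝ) - (q:ℝ)*mcΩ a b)
          * ((b:ℝ)*(q:ℝ) + 2*(q:ℝ)*mcΩ a b + ((p:ℝ) - (q:ℝ)*mcΩ a b)) := by
      have h0 : (0:ℝ) ≤ (a:ℝ)*((p:ℝ) - (q:ℝ)*mcΩ a b) :=
        mul_nonneg (by linarith) hspos.le
      exact mul_le_mul_of_nonneg_left
        (show (b:ℝ)*(q:ℝ) ≤ (b:ℝ)*(q:ℝ) + 2*(q:ℝ)*mcΩ a b + ((p:ℝ) - (q:ℝ)*mcΩ a b) by linarith) h0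
    have h7 : ((q:ℝ) - (a:ℝ)*(q:ℝ)*mcΩ a b) * ((b:ℝ)*(q:ℝ)) ≤ (a:ℝ) := by linarith
    have hbΩ : (0:ℝ) < (b:ℝ) + mcΩ a b := by linarith
    have e1 : (1 - (a:ℝ)*mcΩ a b) * ((b:ℝ) + mcΩ a b) = mcΩ a b := by linear_combination -k
    have key3 : ((q:ℝ) - (a:ℝ)*(q:ℝ)*mcΩ a b)*((b:ℝ)*(q:ℝ))*(mcΩ a b*((b:ℝ)+mcΩ a b))
        = (b:ℝ)*(q:ℝ)^2*mcΩ a b^2 := by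
      linear_combination ((b:ℝ)*(q:ℝ)^2*mcΩ a b) * e1
    have key4 : (a:ℝ)*(mcΩ a b*((b:ℝ)+mcΩ a b)) = (b:ℝ) := by linear_combination k
    have h8 : (b:ℝ)*(q:ℝ)^2*mcΩ a b^2 ≤ (b:ℝ) := by
      calc (b:ℝ)*(q:ℝ)^2*mcΩ a b^2
          = ((q:ℝ) - (a:ℝ)*(q:ℝ)*mcΩ a b)*((b:ℝ)*(q:ℝ))*(mcΩ a b*((b:ℝ)+mcΩ a b)) :=
            key3.symm
        _ ≤ (a:ℝ)*(mcΩ a b*((b:ℝ)+mcΩ a b)) :=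
            mul_le_mul_of_nonneg_right h7 (by positivity)
        _ = (b:ℝ) := key4
    have h9a : ((q:ℝ)*mcΩ a b)^2 ≤ 1 := by nlinarith [h8]
    have h9 : (q:ℝ)*mcΩ a b ≤ 1 := by nlinarith [h9a, hqΩ]
    have hp1 : 1 ≤ p := by
      rcases le_or_gt 1 p with h | h
      · exact h
      · exfalso
        have hple0 : p ≤ 0 := by omega
        have : a * p ≤ 0 := mul_nonpos_of_nonneg_of_nonpos (by omega) hple0
        omega
    have hple : p ≤ 1 := by
      have h2 : (p:ℝ) < 2 := by linarith
      have : p < 2 := by exact_mod_cast h2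
      omega
    have hpe : p = 1 := le_antisymm hple hp1
    subst hpe
    have hqa : q < a := by omega
    have hd1 := (abs_le.mp hle).1
    rw [hδeq] at hd1
    nlinarith [hd1, mul_pos (mul_pos (show (0:ℤ) < b by omega) (show (0:ℤ) < q by omega))
      (show (0:ℤ) < a - q by omega)]
  · -- 1/2 ≤ λ |r|
    rw [hpdef] at hcase
    have hlam : (0:ℝ) < (a:ℝ)*(b:ℝ) + 1 + (a:ℝ)*mcΩ a b := by nlinarith
    have hF : (0:ℝ) < (b:ℝ)*(q:ℝ) + 2*(q:ℝ)*mcΩ a b - ((q:ℝ)*mcΩ a b - (p:ℝ)) := by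
      nlinarith
    have habsδ : |((mcδ a b q:ℤ):ℝ)| = (a:ℝ) * |(q:ℝ)*mcΩ a b - (p:ℝ)|
        * ((b:ℝ)*(q:ℝ) + 2*(q:ℝ)*mcΩ a b - ((q:ℝ)*mcΩ a b - (p:ℝ))) := by
      rw [hid, abs_mul, abs_mul, abs_of_nonneg (by linarith : (0:ℝ) ≤ (a:ℝ)),
        abs_of_pos hF]
    have h6 : (a:ℝ) * |(q:ℝ)*mcΩ a b - (p:ℝ)|
        * ((b:ℝ)*(q:ℝ) + 2*(q:ℝ)*mcΩ a b - ((q:ℝ)*mcΩ a b - (p:ℝ))) ≤ (a:ℝ) := by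
      rw [← habsδ]; exact hδR
    have habs0 : (0:ℝ) ≤ |(q:ℝ)*mcΩ a b - (p:ℝ)| := abs_nonneg _
    have h6' : |(q:ℝ)*mcΩ a b - (p:ℝ)|
        * ((b:ℝ)*(q:ℝ) + 2*(q:ℝ)*mcΩ a b - ((q:ℝ)*mcΩ a b - (p:ℝ))) ≤ 1 := by
      nlinarith [h6, hF, habs0]
    have h7 : (b:ℝ)*(q:ℝ) + 2*(q:ℝ)*mcΩ a b - ((q:ℝ)*mcΩ a b - (p:ℝ))
        ≤ 2*((a:ℝ)*(b:ℝ) + 1 + (a:ℝ)*mcΩ a b) := by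
      nlinarith [mul_nonneg hF.le (show (0:ℝ) ≤ 2*(((a:ℝ)*(b:ℝ) + 1 + (a:ℝ)*mcΩ a b)
          * |(q:ℝ)*mcΩ a b - (p:ℝ)|) - 1 by linarith [hcase]),
        mul_le_mul_of_nonneg_left h6' (by linarith : (0:ℝ) ≤ 2*((a:ℝ)*(b:ℝ) + 1 + (a:ℝ)*mcΩ a b))]
    have hq2a : q ≤ 2*a := by
      by_contra hcon
      push_neg at hcon
      have hq2a' : (2*(a:ℝ)+1) ≤ (q:ℝ) := by exact_mod_cast hcon
      have t1 : ((q:ℝ) - (2*(a:ℝ)+1))*(b:ℝ) ≥ 0 := by nlinarith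
      have t2 : ((q:ℝ) - (2*(a:ℝ)+1))*mcΩ a b ≥ 0 := by nlinarith
      linarith [h7, t1, t2, hr2, hb2, haΩ2, hΩ]
    have hq2a'' : (q:ℝ) ≤ 2*(a:ℝ) := by exact_mod_cast hq2a
    have hqΩ2 : (q:ℝ)*mcΩ a b < 2 := by nlinarith [mul_nonneg (show (0:ℝ) ≤ 2*(a:ℝ) - q by linarith) hΩ.le]
    have hp2 : p ≤ 2 := by
      have h2 : (p:ℝ) < 3 := by linarith
      have : p < 3 := by exact_mod_cast h2
      omega
    have hd1 := (abs_le.mp hle).1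
    have hd2 := (abs_le.mp hle).2
    rw [hδeq] at hd1 hd2
    interval_cases p
    · -- p = 0
      have h4 : (b:ℤ) ≤ b*q^2 :=
        le_mul_of_one_le_right (by omega) (by nlinarith [hq1])
      omega
    · -- p = 1
      rcases lt_or_gt_of_ne hne with h | h
      · nlinarith [hd1, mul_pos (mul_pos (show (0:ℤ) < b by omega) (show (0:ℤ) < q by omega))
          (show (0:ℤ) < a - q by omega)]
      · have h1 : (1:ℤ) ≤ q - a := by omega
        have h4 : (a+1)*(a+1) ≤ b*q :=
          mul_le_mul (by omega) (by omega) (by omega) (by omega)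
        have h5 : b*q ≤ b*q*(q-a) :=
          le_mul_of_one_le_right (mul_nonneg (by omega) (by omega)) h1
        nlinarith [hd2, h4, h5]
    · -- p = 2
      nlinarith [hd1, mul_nonneg (mul_nonneg (show (0:ℤ) ≤ b by omega) (show (0:ℤ) ≤ q by omega))
        (show (0:ℤ) ≤ 2*a - q by omega)]
lemma mc_pairz (a b q : ℤ) : pairω (mcΩ a b) (kzero (mcΩ a b) q)
    = (q:ℝ)*mcΩ a b - (p0 (mcΩ a b) q : ℝ) := by
  simp only [pairω, kzero, Matrix.cons_val_zero, Matrix.cons_val_one, Matrix.head_cons]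
  push_cast; ring

lemma mc_prim_a (a b : ℤ) (ha : 1 ≤ a) (hab : a < b) : mcPrim a b a := by
  refine ⟨ha, ⟨a, ha, rfl, ?_⟩, ?_⟩
  · rw [mc_pairz, mc_p0_a a b ha hab]
    have h1 := mc_aΩ_gt a b ha hab
    have h2 := mc_aΩ_lt_one a b ha hab
    rw [abs_lt]; push_cast; constructor <;> linarith
  · rintro ⟨q', hq', hv, -⟩
    rw [mcU_inv_mulVec] at hv
    have h1 := congrFun hv 1
    simp only [Matrix.cons_val_one, Matrix.head_cons, Matrix.cons_val_zero, kzero, mc_p0_a a b ha hab] at h1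
    omega

lemma mc_prim_one' (a b : ℤ) (ha2 : 2 ≤ a) (hab : a < b) : mcPrim a b 1 := by
  have ha : 1 ≤ a := by omega
  refine ⟨le_refl 1, ⟨1, le_refl 1, rfl, ?_⟩, ?_⟩
  · rw [mc_pairz, mc_p0_one' a b ha hab ha2]
    have h2 := mc_aΩ_lt_one a b ha hab
    have h0 := mcΩ_pos a b ha hab
    have ha' : (2:ℝ) ≤ (a:ℝ) := by exact_mod_cast ha2
    rw [abs_lt]; push_cast; constructor <;> nlinarith
  · rintro ⟨q', hq', hv, -⟩
    rw [mcU_inv_mulVec] at hv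
    have h1 := congrFun hv 1
    have h0 := congrFun hv 0
    simp only [Matrix.cons_val_one, Matrix.head_cons, Matrix.cons_val_zero, kzero,
      mc_p0_one' a b ha hab ha2] at h1 h0
    have hq'1 : q' = 1 := by omega
    subst hq'1
    rw [mc_p0_one' a b ha hab ha2] at h0
    ring_nf at h0
    omega

lemma mc_prim_bp1 (b : ℤ) (hab : 1 < b) : mcPrim 1 b (b+1) := by
  have ha : (1:ℤ) ≤ 1 := le_refl 1
  have h0 := mcΩ_pos 1 b ha hab
  have h1 := mcΩ_lt_one 1 b ha hab
  have k := mc_key 1 b ha hab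
  push_cast at k
  refine ⟨by omega, ⟨b+1, by omega, rfl, ?_⟩, ?_⟩
  · rw [mc_pairz, mc_p0_bp1 1 b ha hab rfl]
    have he : ((b:ℤ):ℝ)*mcΩ 1 b + mcΩ 1 b - ((b:ℤ):ℝ) = mcΩ 1 b - mcΩ 1 b^2 := by
      push_cast; linarith
    rw [abs_lt]; push_cast; constructor <;> nlinarith
  · rintro ⟨q', hq', hv, -⟩
    rw [mcU_inv_mulVec] at hv
    have h1' := congrFun hv 1
    have h0' := congrFun hv 0
    simp only [Matrix.cons_val_one, Matrix.head_cons, Matrix.cons_val_zero, kzero,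
      mc_p0_bp1 1 b ha hab rfl] at h1' h0'
    have hq'1 : q' = 1 := by omega
    subst hq'1
    rw [mc_p0_one1 1 b ha hab rfl] at h0'
    ring_nf at h0'
    omega

lemma mc_delta_a (a b : ℤ) (ha : 1 ≤ a) (hab : a < b) : mcδ a b a = -a := by
  simp only [mcδ, mc_p0_a a b ha hab]; ring

lemma mc_delta_one' (a b : ℤ) (ha2 : 2 ≤ a) (hab : a < b) : mcδ a b 1 = b := by
  simp only [mcδ, mc_p0_one' a b (by omega) hab ha2]; ring

lemma mc_delta_bp1 (b : ℤ) (hab : 1 < b) : mcδ 1 b (b+1) = b := by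
  simp only [mcδ, mc_p0_bp1 1 b (le_refl 1) hab rfl]; ring

lemma mc_den_pos (a b : ℤ) (ha : 1 ≤ a) (hab : a < b) :
    (0:ℝ) < (b:ℝ) + (a:ℝ) * mcΩ a b ^ 2 := by
  have hΩ := mcΩ_pos a b ha hab
  have ha' : (1:ℝ) ≤ (a:ℝ) := by exact_mod_cast ha
  have hb' : (a:ℝ) < (b:ℝ) := by exact_mod_cast hab
  nlinarith

lemma mc_delta_abs_a (a b : ℤ) (ha : 1 ≤ a) (hab : a < b) :
    |((mcδ a b a : ℤ):ℝ)| = (a:ℝ) := by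
  rw [mc_delta_a a b ha hab]
  push_cast
  rw [abs_neg, abs_of_pos (by exact_mod_cast lt_of_lt_of_le zero_lt_one ha)]

lemma mc_gamma_lt (a b : ℤ) (ha : 1 ≤ a) (hab : a < b) (q : ℤ)
    (h : (a:ℤ) < |mcδ a b q|) : mcγ a b a < mcγ a b q := by
  have hΩ := mcΩ_pos a b ha hab
  have hD := mc_den_pos a b ha hab
  have hDabs : |(b:ℝ) + (a:ℝ)*mcΩ a b^2| = (b:ℝ) + (a:ℝ)*mcΩ a b^2 := abs_of_pos hD
  have h' : (a:ℝ) < |((mcδ a b q : ℤ):ℝ)| := by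
    rw [← Int.cast_abs]; exact_mod_cast h
  simp only [mcγ, hDabs]
  rw [div_lt_div_iff₀ hD hD, mc_delta_abs_a a b ha hab]
  have hpos : (0:ℝ) < mcΩ a b * (1 + mcΩ a b) * ((b:ℝ) + (a:ℝ)*mcΩ a b^2) := by positivity
  nlinarith [mul_pos (sub_pos.2 h') hpos]

lemma mc_gammat (a b : ℤ) (ha : 1 ≤ a) (hab : a < b) (q : ℤ) :
    mcγt a b a q = |((mcδ a b q : ℤ):ℝ)| / (a:ℝ) := by
  have hΩ := mcΩ_pos a b ha hab
  have hΩ1 : (0:ℝ) < 1 + mcΩ a b := by linarith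
  have hD := mc_den_pos a b ha hab
  have hDabs : |(b:ℝ) + (a:ℝ)*mcΩ a b^2| = (b:ℝ) + (a:ℝ)*mcΩ a b^2 := abs_of_pos hD
  have ha0 : (a:ℝ) ≠ 0 := by
    have : (1:ℝ) ≤ (a:ℝ) := by exact_mod_cast ha
    linarith
  simp only [mcγt, mcγ, hDabs, mc_delta_abs_a a b ha hab]
  rw [div_div_div_cancel_right₀]
  · rw [mul_div_mul_left]
    exact ne_of_gt (mul_pos hΩ hΩ1)
  · exact ne_of_gt hD
lemma mc_B0 (a b : ℤ) (ha : 1 ≤ a) (hab : a < b) (qb : ℤ)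
    (hprim : mcPrim a b qb) (hne : qb ≠ a)
    (hgcd : Int.gcd (kzero (mcΩ a b) qb 0) (kzero (mcΩ a b) qb 1) = 1)
    (hδ : mcδ a b qb = b) :
    1 < mcB0 a b a ∧ mcB0 a b a ≤ mcγt a b a qb ∧ mcγt a b a qb = (b:ℝ)/(a:ℝ) := by
  have ha0 : (0:ℝ) < (a:ℝ) := by exact_mod_cast lt_of_lt_of_le zero_lt_one ha
  have hb0 : (0:ℝ) < (b:ℝ) := by exact_mod_cast (by omega : (0:ℤ) < b)
  have hmem : mcγt a b a qb ∈ {y : ℝ | ∃ q : ℤ, mcEssPrim a b q ∧ q ≠ a ∧ y = mcγt a b a q} :=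
    ⟨qb, ⟨hprim, hgcd⟩, hne, rfl⟩
  have hlb : ∀ y ∈ {y : ℝ | ∃ q : ℤ, mcEssPrim a b q ∧ q ≠ a ∧ y = mcγt a b a q},
      ((a:ℝ)+1)/(a:ℝ) ≤ y := by
    rintro y ⟨q, ⟨hp, -⟩, hneq, rfl⟩
    rw [mc_gammat a b ha hab q]
    have h := mc_delta_min a b ha hab hp hneq
    have h2 : ((a:ℝ)+1) ≤ |((mcδ a b q : ℤ):ℝ)| := by
      rw [← Int.cast_abs]
      exact_mod_cast (by omega : a + 1 ≤ |mcδ a b q|)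
    gcongr
  have hγb : mcγt a b a qb = (b:ℝ)/(a:ℝ) := by
    rw [mc_gammat a b ha hab qb, hδ, abs_of_pos (by exact_mod_cast hb0)]
  refine ⟨?_, ?_, hγb⟩
  · have h1 : ((a:ℝ)+1)/(a:ℝ) ≤ mcB0 a b a := le_csInf ⟨_, hmem⟩ hlb
    have h2 : (1:ℝ) < ((a:ℝ)+1)/(a:ℝ) := by rw [lt_div_iff₀ ha0]; linarith
    linarith
  · exact csInf_le ⟨((a:ℝ)+1)/(a:ℝ), fun y hy => hlb y hy⟩ hmem



/-- Proposition 7: for a metallic-colored ratio `Ω = [ā,b̄]`, `1 ≤ a < b`, the primary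
resonances and the main secondary resonances (the two resonant sequences formed by the
resonant convergents) are generated respectively by `q̂ = 1`, `q̄ = b+1` if `a = 1`, and
by `q̂ = a`, `q̄ = 1` if `a ≥ 2`; in both cases `1 < B₀ ≤ γ̃*_{q̄} = b/a`. -/
theorem splitting_quadratic_stmt15 (a b : ℤ) (ha : 1 ≤ a) (hab : a < b) :
    (a = 1 →
      mcPrim a b 1 ∧ mcPrim a b (b + 1) ∧
      (∀ q : ℤ, mcPrim a b q → q ≠ 1 → mcγ a b 1 < mcγ a b q) ∧
      kzero (mcΩ a b) 1 = vconv (mcΩ a b) 1 ∧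
      kzero (mcΩ a b) (b + 1) = vconv (mcΩ a b) 2 ∧
      1 < mcB0 a b 1 ∧ mcB0 a b 1 ≤ mcγt a b 1 (b + 1) ∧
      mcγt a b 1 (b + 1) = (b : ℝ) / (a : ℝ)) ∧
    (2 ≤ a →
      mcPrim a b a ∧ mcPrim a b 1 ∧
      (∀ q : ℤ, mcPrim a b q → q ≠ a → mcγ a b a < mcγ a b q) ∧
      kzero (mcΩ a b) a = vconv (mcΩ a b) 1 ∧
      kzero (mcΩ a b) 1 = vconv (mcΩ a b) 0 ∧
      1 < mcB0 a b a ∧ mcB0 a b a ≤ mcγt a b a 1 ∧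
      mcγt a b a 1 = (b : ℝ) / (a : ℝ)) := by
  constructor
  · intro ha1
    subst ha1
    have hb1 : (1:ℤ) < b := hab
    have hprim1 : mcPrim 1 b 1 := mc_prim_a 1 b ha hab
    have hprimb : mcPrim 1 b (b+1) := mc_prim_bp1 b hb1
    have hne : b + 1 ≠ 1 := by omega
    have hgcd : Int.gcd (kzero (mcΩ 1 b) (b+1) 0) (kzero (mcΩ 1 b) (b+1) 1) = 1 := by
      simp only [kzero, Matrix.cons_val_zero, Matrix.cons_val_one, Matrix.head_cons,
        mc_p0_bp1 1 b ha hab rfl]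
      exact Int.isCoprime_iff_gcd_eq_one.mp ⟨1, 1, by ring⟩
    obtain ⟨hB1, hB2, hB3⟩ := mc_B0 1 b ha hab (b+1) hprimb hne hgcd (mc_delta_bp1 b hb1)
    refine ⟨hprim1, hprimb, ?_, ?_, ?_, hB1, hB2, hB3⟩
    · intro q hq hq1
      exact mc_gamma_lt 1 b ha hab q (mc_delta_min 1 b ha hab hq hq1)
    · rw [mc_vconv1 1 b ha hab]
      funext i; fin_cases i <;> simp [kzero, mc_p0_one1 1 b ha hab rfl]
    · rw [mc_vconv2 1 b ha hab]
      funext i; fin_cases i <;> simp [kzero, mc_p0_bp1 1 b ha hab rfl]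
  · intro ha2
    have hprima : mcPrim a b a := mc_prim_a a b ha hab
    have hprim1 : mcPrim a b 1 := mc_prim_one' a b ha2 hab
    have hne : (1:ℤ) ≠ a := by omega
    have hgcd : Int.gcd (kzero (mcΩ a b) 1 0) (kzero (mcΩ a b) 1 1) = 1 := by
      simp only [kzero, Matrix.cons_val_zero, Matrix.cons_val_one, Matrix.head_cons,
        mc_p0_one' a b ha hab ha2]
      exact Int.isCoprime_iff_gcd_eq_one.mp ⟨0, 1, by ring⟩
    obtain ⟨hB1, hB2, hB3⟩ := mc_B0 a b ha hab 1 hprim1 hne hgcd (mc_delta_one' a b ha2 hab)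
    refine ⟨hprima, hprim1, ?_, ?_, ?_, hB1, hB2, hB3⟩
    · intro q hq hq1
      exact mc_gamma_lt a b ha hab q (mc_delta_min a b ha hab hq hq1)
    · rw [mc_vconv1 a b ha hab]
      funext i; fin_cases i <;> simp [kzero, mc_p0_a a b ha hab]
    · rw [mc_vconv0 a b ha hab]
      funext i; fin_cases i <;> simp [kzero, mc_p0_one' a b ha hab ha2]
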